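/- Suppose for a configuration ω there exist two infinite geodesics G_0 (from vertex x) and G_1 (from vertex y) with B_{G_0}(x,y) < 0 < B_{G_1}(x,y). Then coexistence holds for the competing growth model started from (x, y): infinitely many vertices z satisfy τ(x,z) < τ(y,z) and infinitely many vertices z satisfy τ(y,z) < τ(x,z). -/
import Mathlib

open Filter Topology MeasureTheory

/-- Vertices of `ℤ^d`. -/
abbrev V (d : ℕ) := Fin d → ℤ

/-- Nearest-neighbor adjacency in `ℤ^d`. -/
def Adj {d : ℕ} (x y : V d) : Prop := (∑ i, |x i - y i|) = 1

/-- `p 0, p 1, …, p n` is a nearest-neighbor path. -/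
def IsPathOn {d : ℕ} (p : ℕ → V d) (n : ℕ) : Prop := ∀ i < n, Adj (p i) (p (i + 1))

/-- Total weight of the path `p 0, …, p n` under the configuration `ω`. -/
noncomputable def pathWeight {d : ℕ} (ω : V d → V d → ℝ) (p : ℕ → V d) (n : ℕ) : ℝ :=
  ∑ i ∈ Finset.range n, ω (p i) (p (i + 1))

/-- Passage time: infimum over paths from `x` to `y` of the total weight. -/
noncomputable def tau {d : ℕ} (ω : V d → V d → ℝ) (x y : V d) : ℝ :=
  sInf {w : ℝ | ∃ p n, p 0 = x ∧ p n = y ∧ IsPathOn p n ∧ pathWeight ω p n = w}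

/-- An infinite geodesic: every finite subsegment realizes the passage time
between its endpoints. -/
def IsGeodesic {d : ℕ} (ω : V d → V d → ℝ) (v : ℕ → V d) : Prop :=
  ∀ m n, m < n → tau ω (v m) (v n) = ∑ i ∈ Finset.Ico m n, ω (v i) (v (i + 1))

/-- ℓ¹ norm on `ℤ^d`. -/
def l1 {d : ℕ} (x : V d) : ℤ := ∑ i, |x i|

/-- The vertex `(1,0,…,0)`. -/
def e1 (d : ℕ) : V d := fun i => if (i : ℕ) = 0 then 1 else 0


/-- two infinite geodesics whose Busemann values straddle 0 force
coexistence: infinitely many vertices are closer to x and infinitely many are closer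
to y. -/
theorem coexistence_from_straddling_geodesics {d : ℕ} (ω : V d → V d → ℝ)
    (hnn : ∀ x y, 0 ≤ ω x y) (hsym : ∀ x y, ω x y = ω y x)
    (x y : V d) (v w : ℕ → V d) (hv0 : v 0 = x) (hw0 : w 0 = y)
    (hG0 : IsGeodesic ω v) (hG1 : IsGeodesic ω w)
    (hinj0 : Function.Injective v) (hinj1 : Function.Injective w)
    (b0 b1 : ℝ)
    (hB0 : Tendsto (fun n => tau ω x (v n) - tau ω y (v n)) atTop (𝓝 b0))
    (hB1 : Tendsto (fun n => tau ω x (w n) - tau ω y (w n)) atTop (𝓝 b1))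
    (hb0 : b0 < 0) (hb1 : 0 < b1) :
    {z : V d | tau ω x z < tau ω y z}.Infinite ∧
    {z : V d | tau ω y z < tau ω x z}.Infinite := by
  constructor
  · obtain ⟨N, hN⟩ := eventually_atTop.mp (hB0.eventually_lt_const hb0)
    refine Set.Infinite.mono ?_ ((Set.Ici_infinite N).image (hinj0.injOn))
    rintro _ ⟨n, hn, rfl⟩
    exact sub_neg.mp (hN n hn)
  · obtain ⟨N, hN⟩ := eventually_atTop.mp (hB1.eventually_const_lt hb1)
    refine Set.Infinite.mono ?_ ((Set.Ici_infinite N).image (hinj1.injOn))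
    rintro _ ⟨n, hn, rfl⟩
    exact sub_pos.mp (hN n hn)
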